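/- arXiv:2202.00987 — 4 statements merged into one kernel-verified Lean document; each statement's English description precedes it below -/
import Mathlib

section
/- Let G be a finite abelian group of exponent n, A ⊆ G\{0} with A = −A, and K a subfield of Q(ζ_{4n}). Set H = η(Gal(Q(ζ_{4n})/K)) ⊆ (Z/4nZ)^*, where η is the isomorphism Gal(Q(ζ_{4n})/Q) ≅ (Z/4nZ)^* given by σ(ζ_{4n}) = ζ_{4n}^{η(σ)}. Then λ_g = Σ_{a∈A} χ_g(a) lies in K for all g ∈ G if and only if hA = A for all h ∈ H. -/
open Finset Pointwise Polynomial

/-- The standard isomorphism `η : Gal(ℚ(ζ_m)/ℚ) ≅ (ℤ/mℤ)ˣ`, with `σ ζ_m = ζ_m ^ η σ`. -/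
noncomputable def etaIso (m : ℕ+) :
    (CyclotomicField m ℚ ≃ₐ[ℚ] CyclotomicField m ℚ) ≃* (ZMod (m : ℕ))ˣ :=
  @IsCyclotomicExtension.autEquivPow _ _ _ _ _ _ _ _
    (CyclotomicField.isCyclotomicExtension (m : ℕ) ℚ) (Polynomial.cyclotomic.irreducible_rat m.pos)

instance cycField_isCyc (m : ℕ+) :
    IsCyclotomicExtension {((m : ℕ+) : ℕ)} ℚ (CyclotomicField m ℚ) :=
  CyclotomicField.isCyclotomicExtension (m : ℕ) ℚ

/-- Any Galois automorphism acts on `n`-th roots of unity by the `etaIso` power. -/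
lemma galois_pow (n : ℕ+) (σ : CyclotomicField (4*n) ℚ ≃ₐ[ℚ] CyclotomicField (4*n) ℚ)
    (x : CyclotomicField (4*n) ℚ) (hx : x ^ (n : ℕ) = 1) :
    σ x = x ^ ((etaIso (4*n) σ : ZMod ((4*n : ℕ+) : ℕ)).val) := by
  set L := CyclotomicField (4*n) ℚ with hLdef
  haveI : IsCyclotomicExtension {((4*n : ℕ+) : ℕ)} ℚ L := cycField_isCyc (4*n)
  set ζ := IsCyclotomicExtension.zeta ((4*n : ℕ+) : ℕ) ℚ L with hζdef
  have hζ := IsCyclotomicExtension.zeta_spec ((4*n : ℕ+) : ℕ) ℚ L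
  set h : ℕ := ((etaIso (4*n) σ : ZMod ((4*n : ℕ+) : ℕ)).val) with hh
  have hspec : ζ ^ h = σ ζ := by
    have := hζ.autToPow_spec ℚ σ
    rw [hh, etaIso]
    exact this
  have h4 : IsPrimitiveRoot (ζ ^ (4 : ℕ)) (n : ℕ) := by
    refine hζ.pow (4*n).pos ?_
    push_cast; ring
  haveI : NeZero (n : ℕ) := ⟨n.ne_zero⟩
  obtain ⟨i, _, hix⟩ := h4.eq_pow_of_pow_eq_one hx
  rw [← hix, ← pow_mul, map_pow, ← hspec, ← pow_mul, ← pow_mul, mul_comm h (4 * i)]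

theorem lam_mem_iff_stabilizes (n : ℕ+) {G : Type*} [AddCommGroup G]
    [Fintype G] [DecidableEq G]
    (hexp : AddMonoid.exponent G = n)
    (χ : G → AddChar G (CyclotomicField (4 * n) ℚ))
    (hmul : ∀ g h x : G, χ (g + h) x = χ g x * χ h x)
    (hinj : Function.Injective χ)
    (A : Finset G) (hA0 : (0 : G) ∉ A) (hA : -A = A)
    (K : IntermediateField ℚ (CyclotomicField (4 * n) ℚ)) :
    (∀ g : G, (∑ a ∈ A, χ g a) ∈ K) ↔
      ∀ σ ∈ K.fixingSubgroup,
        A.image (fun a =>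
          (((etaIso (4 * n)) σ : ZMod ((4 * n : ℕ+) : ℕ)).val • a)) = A := by
  set L := CyclotomicField (4 * n) ℚ with hL
  haveI : IsCyclotomicExtension {((4*n : ℕ+) : ℕ)} ℚ L := cycField_isCyc (4*n)
  haveI : IsGalois ℚ L := IsCyclotomicExtension.isGalois {((4*n : ℕ+) : ℕ)} ℚ _
  haveI : FiniteDimensional ℚ L := IsCyclotomicExtension.finiteDimensional {((4*n : ℕ+) : ℕ)} ℚ _
  haveI : NeZero (n : ℕ) := ⟨n.ne_zero⟩
  -- exponent facts
  have hnsmul : ∀ a : G, (n : ℕ) • a = 0 := fun a => by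
    rw [← hexp]; exact AddMonoid.exponent_nsmul_eq_zero a
  have h4n0 : ∀ b : G, ((4*n : ℕ+) : ℕ) • b = 0 := by
    intro b
    have h4 : ((4*n : ℕ+) : ℕ) = 4 * (n : ℕ) := by push_cast; ring
    rw [h4, mul_comm, mul_smul, hnsmul]
  have hmod : ∀ (m : ℕ) (a : G), m • a = (m % ((4*n : ℕ+) : ℕ)) • a := by
    intro m a
    conv_lhs => rw [← Nat.div_add_mod m ((4*n : ℕ+) : ℕ)]
    rw [add_nsmul, mul_smul, h4n0, zero_add]
  -- injectivity of multiplication by a unit of ZMod (4n)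
  have hu_inj : ∀ u : (ZMod ((4*n : ℕ+) : ℕ))ˣ,
      Function.Injective (fun a : G => (u : ZMod ((4*n : ℕ+) : ℕ)).val • a) := by
    intro u
    have hlinv : ∀ a : G,
        ((u⁻¹ : _) : ZMod ((4*n : ℕ+) : ℕ)).val • (u : ZMod ((4*n : ℕ+) : ℕ)).val • a = a := by
      intro a
      rw [← mul_smul, hmod]
      have hcast : ((((u⁻¹ : _) : ZMod ((4*n : ℕ+) : ℕ)).val * (u : ZMod ((4*n : ℕ+) : ℕ)).val : ℕ)
          : ZMod ((4*n : ℕ+) : ℕ)) = 1 := by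
        rw [Nat.cast_mul, ZMod.natCast_val, ZMod.natCast_val, ZMod.cast_id', id, id]
        rw [← Units.val_mul, inv_mul_cancel, Units.val_one]
      have hlt : 1 < ((4*n : ℕ+) : ℕ) := by
        have hn : 0 < (n : ℕ) := n.pos
        push_cast
        omega
      have := (ZMod.natCast_eq_natCast_iff _ _ _).mp (hcast.trans (Nat.cast_one).symm)
      unfold Nat.ModEq at this
      rw [Nat.mod_eq_of_lt hlt] at this
      rw [this, one_smul]
    intro a b hab
    have := congrArg (fun c => ((u⁻¹ : _) : ZMod ((4*n : ℕ+) : ℕ)).val • c) hab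
    simpa only [hlinv] using this
  -- χ values are n-th roots of unity
  have hval : ∀ g a : G, (χ g a) ^ (n : ℕ) = 1 := fun g a => by
    rw [← AddChar.map_nsmul_eq_pow, hnsmul, AddChar.map_zero_eq_one]
  -- action of σ on character sums
  have hsigma : ∀ (σ : L ≃ₐ[ℚ] L) (g : G),
      σ (∑ a ∈ A, χ g a) =
        ∑ a ∈ A.image (fun a => ((etaIso (4*n) σ : ZMod ((4*n : ℕ+) : ℕ)).val • a)), χ g a := by
    intro σ g
    rw [map_sum, Finset.sum_image (fun a _ b _ hab => hu_inj (etaIso (4*n) σ) hab)]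
    refine Finset.sum_congr rfl fun a _ => ?_
    rw [galois_pow n σ _ (hval g a), ← AddChar.map_nsmul_eq_pow]
  -- χ is surjective onto the characters of G
  have hli : LinearIndependent L (fun ψ : AddChar G L => ⇑ψ) := by
    have := (linearIndependent_monoidHom (Multiplicative G) L).comp
      (AddChar.toMonoidHomEquiv (A := G) (M := L)) (AddChar.toMonoidHomEquiv.injective)
    exact this
  haveI : Finite (AddChar G L) := hli.finite
  haveI : Fintype (AddChar G L) := Fintype.ofFinite _
  have hcard : Fintype.card (AddChar G L) = Fintype.card G := by
    refine le_antisymm ?_ (Fintype.card_le_of_injective χ hinj)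
    simpa only [Module.finrank_fintype_fun_eq_card] using hli.fintype_card_le_finrank
  have hsurj : Function.Surjective χ :=
    ((Fintype.bijective_iff_injective_and_card χ).mpr ⟨hinj, hcard.symm⟩).surjective
  -- nondegeneracy
  haveI : HasEnoughRootsOfUnity L (n : ℕ) := by
    constructor
    · have hζ := IsCyclotomicExtension.zeta_spec ((4*n : ℕ+) : ℕ) ℚ L
      exact ⟨_, hζ.pow (4*n).pos (by push_cast; ring :
        ((4*n : ℕ+) : ℕ) = 4 * (n : ℕ))⟩
    · infer_instance
  have hnondeg : ∀ y : G, y ≠ 0 → ∃ g : G, χ g y ≠ 1 := by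
    intro y hy
    haveI : HasEnoughRootsOfUnity L (Monoid.exponent (Multiplicative G)) := by
      have : Monoid.exponent (Multiplicative G) = (n : ℕ) := hexp
      rwa [this]
    obtain ⟨φ, hφ⟩ := CommGroup.exists_apply_ne_one_of_hasEnoughRootsOfUnity
      (Multiplicative G) L (a := Multiplicative.ofAdd y)
      (by simpa using hy)
    set ψ : AddChar G L := AddChar.toMonoidHomEquiv.symm ((Units.coeHom L).comp φ) with hψ
    obtain ⟨g, hg⟩ := hsurj ψ
    refine ⟨g, ?_⟩
    rw [hg, hψ, AddChar.toMonoidHomEquiv_symm_apply]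
    simp only [MonoidHom.coe_comp, Function.comp_apply, Units.coeHom_apply]
    exact fun h => hφ (Units.ext h)
  -- orthogonality sum
  have hS : ∀ y : G, ∑ g : G, χ g y = if y = 0 then (Fintype.card G : L) else 0 := by
    intro y
    split_ifs with hy
    · subst hy
      simp only [AddChar.map_zero_eq_one, Finset.sum_const, Finset.card_univ,
        nsmul_eq_mul, mul_one]
    · obtain ⟨g₀, hg₀⟩ := hnondeg y hy
      have hshift : χ g₀ y * ∑ g : G, χ g y = ∑ g : G, χ g y := by
        rw [Finset.mul_sum]
        exact Fintype.sum_equiv (Equiv.addLeft g₀) _ _ (fun x => (hmul g₀ x y).symm)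
      have hzero : (χ g₀ y - 1) * ∑ g : G, χ g y = 0 := by
        rw [sub_mul, one_mul, hshift, sub_self]
      rcases mul_eq_zero.mp hzero with h | h
      · exact absurd (sub_eq_zero.mp h) hg₀
      · exact h
  -- cancellation
  have hcancel : ∀ B C : Finset G,
      (∀ g : G, ∑ a ∈ B, χ g a = ∑ a ∈ C, χ g a) → B = C := by
    intro B C hBC
    ext x
    have key : ∀ D : Finset G,
        ∑ g : G, χ g (-x) * ∑ a ∈ D, χ g a = if x ∈ D then (Fintype.card G : L) else 0 := by
      intro D
      have : ∀ g : G, χ g (-x) * ∑ a ∈ D, χ g a = ∑ a ∈ D, χ g (a - x) := by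
        intro g
        rw [Finset.mul_sum]
        refine Finset.sum_congr rfl fun a _ => ?_
        rw [sub_eq_add_neg, AddChar.map_add_eq_mul]
        exact mul_comm _ _
      simp_rw [this]
      rw [Finset.sum_comm]
      have : ∀ a : G, ∑ g : G, χ g (a - x) = if a = x then (Fintype.card G : L) else 0 := by
        intro a
        rw [hS]
        simp only [sub_eq_zero]
      simp_rw [this]
      exact Finset.sum_ite_eq' D x _
    have hcardne : (Fintype.card G : L) ≠ 0 :=
      Nat.cast_ne_zero.mpr Fintype.card_ne_zero
    have h12 : (if x ∈ B then (Fintype.card G : L) else 0)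
        = (if x ∈ C then (Fintype.card G : L) else 0) := by
      rw [← key B, ← key C]
      exact Finset.sum_congr rfl fun g _ => by rw [hBC g]
    by_cases hxB : x ∈ B <;> by_cases hxC : x ∈ C
    · exact iff_of_true hxB hxC
    · exfalso; rw [if_pos hxB, if_neg hxC] at h12; exact hcardne h12
    · exfalso; rw [if_neg hxB, if_pos hxC] at h12; exact hcardne h12.symm
    · exact iff_of_false hxB hxC
  constructor
  · intro hK σ hσ
    refine hcancel _ A fun g => ?_
    have h1 := hsigma σ g
    rw [(K.mem_fixingSubgroup_iff σ).mp hσ _ (hK g)] at h1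
    exact h1.symm
  · intro hStab g
    rw [← IsGalois.fixedField_fixingSubgroup K]
    show ∀ σ : K.fixingSubgroup, σ • (∑ a ∈ A, χ g a) = ∑ a ∈ A, χ g a
    rintro ⟨σ, hσ⟩
    have h1 := hsigma σ g
    rw [hStab σ hσ] at h1
    exact h1
end

section
/- Let G be a finite abelian group of exponent n and S ⊆ G\{0} with S = −S. Let H = {h ∈ (Z/4nZ)^* : hS = S} and H' = {h' ∈ (Z/nZ)^* : h'S = S}. Then φ(4n)/|H| = φ(n)/|H'|. -/
open Finset Pointwise

private lemma card_comap_pred {A B : Type*} [Group A] [Group B] [Fintype A] [Fintype B]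
    (f : A →* B) (hf : Function.Surjective f) (p : B → Prop) [DecidablePred p] :
    Nat.card {a : A // p (f a)} = Nat.card f.ker * Nat.card {b : B // p b} := by
  classical
  have e : {a : A // p (f a)} ≃ Σ b : {b : B // p b}, (f ⁻¹' {(b : B)}) :=
    { toFun := fun a => ⟨⟨f a.1, a.2⟩, ⟨a.1, rfl⟩⟩
      invFun := fun x => ⟨x.2.1, by
        have hx : f x.2.1 = (x.1 : B) := x.2.2
        rw [hx]; exact x.1.2⟩
      left_inv := fun a => rfl
      right_inv := fun x => by
        rcases x with ⟨⟨b, hb⟩, ⟨a, ha⟩⟩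
        have : f a = b := ha
        subst this
        rfl }
  have hfib : ∀ b : {b : B // p b}, Fintype.card (f ⁻¹' {(b : B)}) = Nat.card f.ker := by
    intro b
    rw [← Nat.card_eq_fintype_card]
    exact Nat.card_congr (f.fiberEquivKerOfSurjective hf (b : B))
  rw [Nat.card_congr e, Nat.card_eq_fintype_card, Fintype.card_sigma,
    Finset.sum_congr rfl (fun b _ => hfib b), Finset.sum_const, smul_eq_mul, mul_comm,
    Nat.card_eq_fintype_card]
  rw [Nat.card_eq_fintype_card]
  rfl

private lemma card_eq_card_ker_mul {A B : Type*} [Group A] [Group B] [Fintype A] [Fintype B]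
    (f : A →* B) (hf : Function.Surjective f) :
    Nat.card A = Nat.card f.ker * Nat.card B := by
  calc Nat.card A = Nat.card {a : A // True} :=
        Nat.card_congr (Equiv.subtypeUnivEquiv fun _ => trivial).symm
    _ = Nat.card f.ker * Nat.card {b : B // True} := card_comap_pred f hf (fun _ => True)
    _ = Nat.card f.ker * Nat.card B := by
        rw [Nat.card_congr (Equiv.subtypeUnivEquiv (fun _ : B => trivial))]

theorem totient_div_stabilizer_eq (n : ℕ) (hn : 0 < n) {G : Type*} [AddCommGroup G]
    [Fintype G] [DecidableEq G]
    (hexp : AddMonoid.exponent G = n)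
    (S : Finset G) (hS0 : (0 : G) ∉ S) (hS : -S = S) :
    Nat.totient (4 * n) /
        Nat.card {h : (ZMod (4 * n))ˣ //
          S.image (fun s => (h : ZMod (4 * n)).val • s) = S}
      = Nat.totient n /
        Nat.card {h' : (ZMod n)ˣ //
          S.image (fun s => (h' : ZMod n).val • s) = S} := by
  classical
  have hn4 : 0 < 4 * n := by omega
  haveI : NeZero n := ⟨hn.ne'⟩
  haveI : NeZero (4 * n) := ⟨hn4.ne'⟩
  have d : n ∣ 4 * n := dvd_mul_left n 4
  set f := ZMod.unitsMap d with hf_def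
  have hfs : Function.Surjective f := ZMod.unitsMap_surjective d
  -- the action compatibility
  have key : ∀ h : (ZMod (4 * n))ˣ, ∀ s : G,
      ((f h : ZMod n)).val • s = (h : ZMod (4 * n)).val • s := by
    intro h s
    have h1 : (f h : ZMod n) = (((h : ZMod (4 * n)).val : ℕ) : ZMod n) := by
      rw [hf_def, ZMod.unitsMap_def]
      simp only [Units.coe_map, MonoidHom.coe_coe, ZMod.castHom_apply]
      rw [← ZMod.natCast_val]
    rw [h1, ZMod.val_natCast]
    conv_rhs => rw [AddMonoid.nsmul_eq_mod_exponent, hexp]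
  have hpred : ∀ h : (ZMod (4 * n))ˣ,
      (S.image (fun s => (h : ZMod (4 * n)).val • s) = S) ↔
      (S.image (fun s => ((f h : ZMod n)).val • s) = S) := by
    intro h
    have : (fun s : G => (h : ZMod (4 * n)).val • s)
        = fun s : G => ((f h : ZMod n)).val • s := by
      funext s; rw [key]
    rw [this]
  have hH : Nat.card {h : (ZMod (4 * n))ˣ //
      S.image (fun s => (h : ZMod (4 * n)).val • s) = S}
      = Nat.card {h : (ZMod (4 * n))ˣ //
      S.image (fun s => ((f h : ZMod n)).val • s) = S} :=
    Nat.card_congr (Equiv.subtypeEquivRight hpred)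
  have hcomap := card_comap_pred f hfs
      (fun h' : (ZMod n)ˣ => S.image (fun s => (h' : ZMod n).val • s) = S)
  have htot : Nat.totient (4 * n) = Nat.card f.ker * Nat.totient n := by
    have := card_eq_card_ker_mul f hfs
    rw [Nat.card_eq_fintype_card, Nat.card_eq_fintype_card (α := (ZMod n)ˣ),
      ZMod.card_units_eq_totient, ZMod.card_units_eq_totient] at this
    exact this
  have hker : 0 < Nat.card f.ker := Nat.card_pos
  rw [hH, hcomap, htot, Nat.mul_div_mul_left _ _ hker]
end

section
/- Let G be a finite abelian group of exponent n with 4 ∤ n, and let B ⊆ G\{0} with B ∩ (−B) = ∅. If kB = B for every k ∈ (Z/4nZ)^* with k ≡ 1 (mod 4), then B = ∅. -/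
open Finset Pointwise

theorem B_empty_of_not_four_dvd (n : ℕ) (hn : 0 < n) {G : Type*} [AddCommGroup G]
    [Fintype G] [DecidableEq G]
    (hexp : AddMonoid.exponent G = n) (h4 : ¬ (4 ∣ n))
    (B : Finset G) (hB0 : (0 : G) ∉ B) (hB : B ∩ -B = ∅)
    (hstab : ∀ k : (ZMod (4 * n))ˣ, (k : ZMod (4 * n)).val % 4 = 1 →
      B.image (fun b => (k : ZMod (4 * n)).val • b) = B) :
    B = ∅ := by
  -- choose k with k ≡ 1 mod 4, k ≡ -1 mod n, k < 4n
  obtain ⟨k, c, hk4, hkc, hklt⟩ : ∃ k c : ℕ, k % 4 = 1 ∧ k + 1 = c * n ∧ k < 4 * n := by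
    rcases Nat.even_or_odd n with he | ho
    · refine ⟨n - 1, 1, ?_, ?_, ?_⟩ <;> [skip; omega; omega]
      obtain ⟨m, hm⟩ := he
      have : ¬ (4 ∣ n) := h4
      omega
    · exact ⟨2 * n - 1, 2, by obtain ⟨m, hm⟩ := ho; omega, by omega, by omega⟩
  -- k is coprime to 4n
  have hcop : Nat.Coprime k (4 * n) := by
    have h1 : Nat.Coprime k 4 := by
      have : Nat.gcd 4 k = Nat.gcd (k % 4) 4 := Nat.gcd_rec 4 k
      rw [hk4] at this
      simpa [Nat.Coprime, Nat.gcd_comm] using this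
    have h2 : Nat.Coprime k n := by
      have hd1 : Nat.gcd k n ∣ k := Nat.gcd_dvd_left k n
      have hd2 : Nat.gcd k n ∣ c * n := Dvd.dvd.mul_left (Nat.gcd_dvd_right k n) c
      rw [← hkc] at hd2
      have : Nat.gcd k n ∣ 1 := by simpa using Nat.dvd_sub hd2 hd1
      exact Nat.dvd_one.mp this
    exact Nat.Coprime.mul_right h1 h2
  have hne : NeZero (4 * n) := ⟨by omega⟩
  set u : (ZMod (4 * n))ˣ := ZMod.unitOfCoprime k hcop with hu
  have hval : ((u : ZMod (4 * n))).val = k := by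
    rw [hu, ZMod.coe_unitOfCoprime, ZMod.val_natCast, Nat.mod_eq_of_lt hklt]
  have hsmul : ∀ b : G, k • b = -b := by
    intro b
    have hnb : n • b = 0 := by
      rw [← hexp]; exact AddMonoid.exponent_nsmul_eq_zero b
    have : (k + 1) • b = 0 := by
      rw [hkc, mul_nsmul', hnb, smul_zero]
    rw [succ_nsmul] at this
    exact eq_neg_of_add_eq_zero_left this
  have himg := hstab u (by rw [hval, hk4])
  rw [hval] at himg
  have heq : (fun b : G => k • b) = (fun b : G => -b) := funext hsmul
  have hBneg : -B = B := by
    rw [← Finset.image_neg_eq_neg, ← heq]; exact himg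
  by_contra hBne
  obtain ⟨b, hb⟩ := Finset.nonempty_iff_ne_empty.mpr hBne
  have : b ∈ B ∩ -B := Finset.mem_inter.mpr ⟨hb, by rw [hBneg]; exact hb⟩
  rw [hB] at this
  exact absurd this (Finset.notMem_empty b)
end

section
/- Let G be a finite abelian group of exponent n with 4 | n, and let B ⊆ G\{0} with B ∩ (−B) = ∅. If kB = B for every k ∈ (Z/4nZ)^* with k ≡ 1 (mod 4), then every element of B has order divisible by 4. -/
open Finset Pointwise

theorem order_four_dvd_of_stabilized (n : ℕ) (hn : 0 < n) {G : Type*} [AddCommGroup G]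
    [Fintype G] [DecidableEq G]
    (hexp : AddMonoid.exponent G = n) (h4 : 4 ∣ n)
    (B : Finset G) (hB0 : (0 : G) ∉ B) (hB : B ∩ -B = ∅)
    (hstab : ∀ k : (ZMod (4 * n))ˣ, (k : ZMod (4 * n)).val % 4 = 1 →
      B.image (fun b => (k : ZMod (4 * n)).val • b) = B) :
    ∀ x ∈ B, 4 ∣ addOrderOf x := by
  intro x hx
  by_contra h4o
  set ℓ := n.factorization 2 with hℓdef
  set m := ordCompl[2] n with hmdef
  have hp2 : Nat.Prime 2 := Nat.prime_two
  have hnne : n ≠ 0 := hn.ne'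
  have hmpos : 0 < m := Nat.ordCompl_pos 2 hnne
  have hmodd : ¬ 2 ∣ m := Nat.not_dvd_ordCompl hp2 hnne
  have hn_eq : 2 ^ ℓ * m = n := Nat.ordProj_mul_ordCompl_eq_self n 2
  -- the order divides 2*m
  have ho_dvd_n : addOrderOf x ∣ n := by
    rw [← hexp]; exact AddMonoid.addOrder_dvd_exponent x
  have hopos : 0 < addOrderOf x := addOrderOf_pos x
  have hone : addOrderOf x ≠ 0 := hopos.ne'
  have hv : (addOrderOf x).factorization 2 ≤ 1 := by
    by_contra hv
    exact h4o (by
      have : 2 ^ 2 ∣ addOrderOf x :=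
        (Nat.Prime.pow_dvd_iff_le_factorization hp2 hone).2 (by omega)
      simpa using this)
  have ho_dvd : addOrderOf x ∣ 2 * m := by
    have h1 : 2 ^ (addOrderOf x).factorization 2 ∣ 2 ^ 1 := pow_dvd_pow 2 hv
    have h2 : ordCompl[2] (addOrderOf x) ∣ m :=
      Nat.ordCompl_dvd_ordCompl_of_dvd ho_dvd_n 2
    calc addOrderOf x = 2 ^ (addOrderOf x).factorization 2 * ordCompl[2] (addOrderOf x) :=
          (Nat.ordProj_mul_ordCompl_eq_self (addOrderOf x) 2).symm
      _ ∣ 2 ^ 1 * m := mul_dvd_mul h1 h2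
      _ = 2 * m := by ring
  -- coprimality of 2*m-1 with 4*n
  have hℓ2 : 2 ≤ ℓ := by
    have : 2 ^ 2 ∣ n := by simpa using h4
    exact (Nat.Prime.pow_dvd_iff_le_factorization hp2 hnne).1 this
  have hcons : Nat.Coprime (2 * m - 1) (2 * m) := by
    have h := Nat.coprime_add_self_right.2 (Nat.coprime_one_right (2 * m - 1))
    simpa [show 1 + (2 * m - 1) = 2 * m by omega] using h
  have hcop2 : Nat.Coprime (2 * m - 1) 2 := hcons.coprime_dvd_right ⟨m, rfl⟩
  have hcopm : Nat.Coprime (2 * m - 1) m := hcons.coprime_dvd_right ⟨2, by ring⟩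
  have h4n_eq : 4 * n = 2 ^ (ℓ + 2) * m := by
    rw [← hn_eq]; ring
  have hcop : Nat.Coprime (2 * m - 1) (4 * n) := by
    rw [h4n_eq]
    exact Nat.Coprime.mul_right (hcop2.pow_right _) hcopm
  haveI : NeZero (4 * n) := ⟨by omega⟩
  set u : (ZMod (4 * n))ˣ := ZMod.unitOfCoprime (2 * m - 1) hcop with hu
  have hmn : m ≤ n := Nat.le_of_dvd hn (Nat.ordCompl_dvd n 2)
  have hval : ((u : ZMod (4 * n))).val = 2 * m - 1 := by
    rw [hu, ZMod.coe_unitOfCoprime]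
    exact ZMod.val_cast_of_lt (by omega)
  have hmod4 : ((u : ZMod (4 * n))).val % 4 = 1 := by
    rw [hval]; omega
  have himg := hstab u hmod4
  have h2mx : (2 * m) • x = 0 := by
    rw [← addOrderOf_dvd_iff_nsmul_eq_zero]; exact ho_dvd
  have hkx : ((u : ZMod (4 * n))).val • x = -x := by
    rw [hval]
    have hs : (2 * m - 1 + 1) • x = (2 * m - 1) • x + x := succ_nsmul x _
    rw [show 2 * m - 1 + 1 = 2 * m by omega, h2mx] at hs
    exact eq_neg_of_add_eq_zero_left hs.symm
  have hnegx : -x ∈ B := by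
    rw [← himg]
    exact Finset.mem_image.2 ⟨x, hx, hkx⟩
  have : x ∈ B ∩ -B := Finset.mem_inter.2 ⟨hx, by
    rw [Finset.mem_neg]; exact ⟨-x, hnegx, neg_neg x⟩⟩
  rw [hB] at this
  exact absurd this (Finset.notMem_empty x)
end
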